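/- The selection function g on U = {0,1,2,3} defined by g(i,X) = {1} if X = {1,2} and i = 0, g(i,X) = {i} if i ∈ X, and g(i,X) = X otherwise, satisfies the CSO condition: for all i ∈ U and X, Y ⊆ U, if g(i,X) ⊆ Y and g(i,Y) ⊆ X then g(i,X) = g(i,Y). -/

import Mathlib

open Classical in
noncomputable def g (i : Fin 4) (X : Set (Fin 4)) : Set (Fin 4) :=
  if X = ({1, 2} : Set (Fin 4)) ∧ i = 0 then {1}
  else if i ∈ X then {i}
  else X

theorem g_cso : ∀ (i : Fin 4) (X Y : Set (Fin 4)), g i X ⊆ Y → g i Y ⊆ X → g i X = g i Y := by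
  intro i X Y h1 h2
  unfold g at *
  by_cases hX : X = ({1, 2} : Set (Fin 4)) ∧ i = 0
  · obtain ⟨hXA, hi⟩ := hX
    subst hXA hi
    by_cases hY : Y = ({1, 2} : Set (Fin 4))
    · simp [hY]
    · simp only [if_pos (⟨rfl, rfl⟩ : ({1,2}:Set (Fin 4)) = {1,2} ∧ (0:Fin 4) = 0),
        if_neg (by simp [hY] : ¬(Y = ({1, 2} : Set (Fin 4)) ∧ True))] at *
      by_cases h0 : (0 : Fin 4) ∈ Y
      · simp only [if_pos h0] at h2
        have : (0:Fin 4) ∈ ({1,2}:Set (Fin 4)) := h2 rfl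
        simp at this
      · simp only [if_neg h0] at *
        have h1' : (1:Fin 4) ∈ Y := h1 rfl
        have : Y = ({1} : Set (Fin 4)) := by
          ext x
          constructor
          · intro hx
            have := h2 hx
            simp only [Set.mem_insert_iff, Set.mem_singleton_iff] at this ⊢
            rcases this with h | h
            · exact h
            · exfalso; apply hY
              ext y
              simp only [Set.mem_insert_iff, Set.mem_singleton_iff]
              constructor
              · intro hy; exact h2 hy
              · rintro (rfl | rfl)
                · exact h1'
                · rwa [h] at hx
          · intro hx; simp only [Set.mem_singleton_iff] at hx; subst hx; exact h1'
        rw [this]; simp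
  · simp only [if_neg hX] at *
    by_cases hiX : i ∈ X
    · simp only [if_pos hiX] at *
      by_cases hY : Y = ({1, 2} : Set (Fin 4)) ∧ i = 0
      · exfalso
        obtain ⟨hYA, hi⟩ := hY
        subst hi
        have := h1 rfl
        rw [hYA] at this
        simp at this
      · simp only [if_neg hY] at *
        have hiY : i ∈ Y := h1 rfl
        simp [hiY]
    · simp only [if_neg hiX] at *
      by_cases hY : Y = ({1, 2} : Set (Fin 4)) ∧ i = 0
      · obtain ⟨hYA, hi⟩ := hY
        subst hi
        simp only [if_pos (⟨hYA, trivial⟩ : Y = ({1,2}:Set (Fin 4)) ∧ True)] at *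
        have h1' : (1:Fin 4) ∈ X := h2 rfl
        have : X = ({1} : Set (Fin 4)) := by
          ext x
          constructor
          · intro hx
            have hxy := h1 hx
            rw [hYA] at hxy
            simp only [Set.mem_insert_iff, Set.mem_singleton_iff] at hxy ⊢
            rcases hxy with h | h
            · exact h
            · exfalso; apply hX
              refine ⟨?_, trivial⟩
              ext y
              simp only [Set.mem_insert_iff, Set.mem_singleton_iff]
              constructor
              · intro hy; have := h1 hy; rw [hYA] at this; simpa using this
              · rintro (rfl | rfl)
                · exact h1'
                · rwa [h] at hx
          · intro hx; simp only [Set.mem_singleton_iff] at hx; subst hx; exact h1'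
        rw [this]
      · simp only [if_neg hY] at *
        by_cases hiY : i ∈ Y
        · simp only [if_pos hiY] at h2
          exact absurd (h2 rfl) hiX
        · simp only [if_neg hiY] at *
          exact Set.Subset.antisymm h1 h2
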